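/- For every (z, w, e) ∈ Y: the gradient of E_GEN at (z, w, e) equals (∇H_A(z) + C*w, w + Cz, 1), the gradient of S_GEN at (z, w, e) equals (0, 0, β), and J_GEN(z)(∇E_GEN(z,w,e)) + K_GEN(z,w)(∇S_GEN(z,w,e)) = (J_A(z)(∇H_A(z) + C*w), −D(w + Cz), ⟨D(w + Cz), w + Cz⟩); hence the coarse-grained equations ż = J_A(z)(∇H_A(z) + C*w), ẇ = −D(w + Cz), ė = ⟨D(w + Cz), w + Cz⟩ have the GENERIC form ẏ = J_GEN(y)∇E_GEN(y) + K_GEN(y)∇S_GEN(y). -/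

import Mathlib

open RealInnerProductSpace

/-- In the GENERIC setting on `Y = Z × W × ℝ` with energy
`E_GEN(z,w,e) = H_A(z) + ⟨Cz, w⟩ + ½‖w‖² + e` and entropy `S_GEN(z,w,e) = β·e`:
the gradient of `E_GEN` at `(z,w,e)` is `(∇H_A(z) + C*w, w + Cz, 1)`, the gradient of
`S_GEN` is `(0, 0, β)`, and
`J_GEN(z)(∇E_GEN) + K_GEN(z,w)(∇S_GEN) = (J_A(z)(∇H_A(z) + C*w), −D(w + Cz), ⟨D(w + Cz), w + Cz⟩)`;
hence the coarse-grained equations have the GENERIC form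
`ẏ = J_GEN(y)∇E_GEN(y) + K_GEN(y)∇S_GEN(y)`. -/
theorem generic_form_of_coarse_grained_equations
    {Z : Type*} [NormedAddCommGroup Z] [InnerProductSpace ℝ Z] [FiniteDimensional ℝ Z]
    {W : Type*} [NormedAddCommGroup W] [InnerProductSpace ℝ W] [FiniteDimensional ℝ W]
    (β : ℝ) (hβ : 0 < β)
    (C : Z →L[ℝ] W)
    (HA : Z → ℝ) (hHA : ContDiff ℝ 1 HA)
    (D : W →L[ℝ] W)
    (JA : Z → Z →L[ℝ] Z)
    (hJA : ∀ z : Z, ContinuousLinearMap.adjoint (JA z) = -(JA z)) :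
    ∀ (z : Z) (w : W) (e : ℝ),
      -- the symmetric and skew-symmetric parts of D
      let Dsym : W →L[ℝ] W := ((1 : ℝ) / 2) • (D + ContinuousLinearMap.adjoint D)
      let Dskw : W →L[ℝ] W := ((1 : ℝ) / 2) • (D - ContinuousLinearMap.adjoint D)
      -- (1) the gradient of E_GEN at (z, w, e) is (∇H_A(z) + C*w, w + Cz, 1)
      (∃ L' : Z × W × ℝ →L[ℝ] ℝ,
        (∀ v : Z × W × ℝ,
          L' v = ⟪gradient HA z + ContinuousLinearMap.adjoint C w, v.1⟫
            + ⟪w + C z, v.2.1⟫ + v.2.2) ∧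
        HasFDerivAt (fun p : Z × W × ℝ =>
          HA p.1 + ⟪C p.1, p.2.1⟫ + (1 / 2) * ‖p.2.1‖ ^ 2 + p.2.2) L' (z, w, e)) ∧
      -- (2) the gradient of S_GEN at (z, w, e) is (0, 0, β)
      (∃ L' : Z × W × ℝ →L[ℝ] ℝ,
        (∀ v : Z × W × ℝ,
          L' v = ⟪(0 : Z), v.1⟫ + ⟪(0 : W), v.2.1⟫ + β * v.2.2) ∧
        HasFDerivAt (fun p : Z × W × ℝ => β * p.2.2) L' (z, w, e)) ∧
      -- (3) J_GEN(z)(∇E_GEN) + K_GEN(z,w)(∇S_GEN) equals the coarse-grained vector field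
      ((JA z (gradient HA z + ContinuousLinearMap.adjoint C w),
          -(Dskw (w + C z)), (0 : ℝ))
        + β⁻¹ • ((0 : Z),
            Dsym (0 : W) - β • Dsym (w + C z),
            -⟪Dsym (w + C z), (0 : W)⟫ + β * ⟪Dsym (w + C z), w + C z⟫)
        = (JA z (gradient HA z + ContinuousLinearMap.adjoint C w),
            -(D (w + C z)), ⟪D (w + C z), w + C z⟫)) := by
  intro z w e Dsym Dskw
  have hβ0 : β ≠ 0 := ne_of_gt hβ
  -- projections
  set fst : Z × W × ℝ →L[ℝ] Z := ContinuousLinearMap.fst ℝ Z (W × ℝ) with hfst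
  set snd1 : Z × W × ℝ →L[ℝ] W :=
    (ContinuousLinearMap.fst ℝ W ℝ).comp (ContinuousLinearMap.snd ℝ Z (W × ℝ)) with hsnd1
  set snd2 : Z × W × ℝ →L[ℝ] ℝ :=
    (ContinuousLinearMap.snd ℝ W ℝ).comp (ContinuousLinearMap.snd ℝ Z (W × ℝ)) with hsnd2
  have hdiffHA : DifferentiableAt ℝ HA z := (hHA.differentiable one_ne_zero) z
  refine ⟨?_, ?_, ?_⟩
  · -- (1)
    -- derivative of HA ∘ fst
    have h1 : HasFDerivAt (fun p : Z × W × ℝ => HA p.1)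
        ((fderiv ℝ HA z).comp fst) (z, w, e) :=
      (hdiffHA.hasFDerivAt).comp (z, w, e) (fst.hasFDerivAt)
    -- derivative of the bilinear inner term
    have hin := (isBoundedBilinearMap_inner (𝕜 := ℝ) (E := W)).hasFDerivAt (C z, w)
    have hT : HasFDerivAt (fun p : Z × W × ℝ => ((C p.1, p.2.1) : W × W))
        ((C.comp fst).prod snd1) (z, w, e) := ((C.comp fst).prod snd1).hasFDerivAt
    have h2 : HasFDerivAt (fun p : Z × W × ℝ => ⟪C p.1, p.2.1⟫)
        (((isBoundedBilinearMap_inner (𝕜 := ℝ) (E := W)).deriv (C z, w)).comp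
          ((C.comp fst).prod snd1)) (z, w, e) := by
        have := hin.comp (z, w, e) hT; exact this
    -- derivative of the norm-square term
    have hin2 := (isBoundedBilinearMap_inner (𝕜 := ℝ) (E := W)).hasFDerivAt (w, w)
    have hT2 : HasFDerivAt (fun p : Z × W × ℝ => ((p.2.1, p.2.1) : W × W))
        (snd1.prod snd1) (z, w, e) := (snd1.prod snd1).hasFDerivAt
    have h3' : HasFDerivAt (fun p : Z × W × ℝ => (1 / 2 : ℝ) * ⟪p.2.1, p.2.1⟫)
        ((1 / 2 : ℝ) • (((isBoundedBilinearMap_inner (𝕜 := ℝ) (E := W)).deriv (w, w)).comp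
          (snd1.prod snd1))) (z, w, e) := by
        have := (hin2.comp (z, w, e) hT2).const_smul (1 / 2 : ℝ); exact this
    have h3 : HasFDerivAt (fun p : Z × W × ℝ => (1 / 2 : ℝ) * ‖p.2.1‖ ^ 2)
        ((1 / 2 : ℝ) • (((isBoundedBilinearMap_inner (𝕜 := ℝ) (E := W)).deriv (w, w)).comp
          (snd1.prod snd1))) (z, w, e) := by
      simpa only [real_inner_self_eq_norm_sq] using h3'
    have h4 : HasFDerivAt (fun p : Z × W × ℝ => p.2.2) snd2 (z, w, e) := snd2.hasFDerivAt
    refine ⟨(fderiv ℝ HA z).comp fst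
        + ((isBoundedBilinearMap_inner (𝕜 := ℝ) (E := W)).deriv (C z, w)).comp
            ((C.comp fst).prod snd1)
        + (1 / 2 : ℝ) • (((isBoundedBilinearMap_inner (𝕜 := ℝ) (E := W)).deriv (w, w)).comp
            (snd1.prod snd1))
        + snd2, ?_, ?_⟩
    · intro v
      have hgrad : ⟪gradient HA z, v.1⟫ = fderiv ℝ HA z v.1 := by
        show (InnerProductSpace.toDual ℝ Z) (gradient HA z) v.1 = _
        rw [gradient, LinearIsometryEquiv.apply_symm_apply]
      have hadj : ⟪ContinuousLinearMap.adjoint C w, v.1⟫ = ⟪C v.1, w⟫ := by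
        rw [ContinuousLinearMap.adjoint_inner_left, real_inner_comm]
      simp only [ContinuousLinearMap.add_apply, ContinuousLinearMap.coe_smul',
        Pi.smul_apply, ContinuousLinearMap.coe_comp', Function.comp_apply,
        ContinuousLinearMap.prod_apply, IsBoundedBilinearMap.deriv_apply,
        inner_add_left, hgrad, hadj, hfst, hsnd1, hsnd2,
        ContinuousLinearMap.coe_fst', ContinuousLinearMap.coe_snd',
        smul_eq_mul, inner_add_right]
      have : ⟪v.2.1, w⟫ = ⟪w, v.2.1⟫ := real_inner_comm _ _
      ring_nf
      rw [real_inner_comm w v.2.1]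
      ring
    · exact ((h1.add h2).add h3).add h4
  · -- (2)
    refine ⟨β • snd2, ?_, ?_⟩
    · intro v
      simp [hsnd2, smul_eq_mul]
    · have : HasFDerivAt (fun p : Z × W × ℝ => (β • snd2) p) (β • snd2) (z, w, e) :=
        (β • snd2).hasFDerivAt
      simpa [hsnd2, smul_eq_mul] using this
  · -- (3)
    have hDsum : Dskw (w + C z) + Dsym (w + C z) = D (w + C z) := by
      simp only [Dsym, Dskw, ContinuousLinearMap.smul_apply, ContinuousLinearMap.sub_apply,
        ContinuousLinearMap.add_apply]
      module
    have hinner : ⟪Dsym (w + C z), w + C z⟫ = ⟪D (w + C z), w + C z⟫ := by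
      simp only [Dsym, ContinuousLinearMap.smul_apply, ContinuousLinearMap.add_apply,
        inner_smul_left, inner_add_left, ContinuousLinearMap.adjoint_inner_left]
      rw [real_inner_comm (w + C z) (D (w + C z))]
      simp only [inner_add_left, starRingEnd_apply, star_trivial]
      ring
    refine Prod.ext ?_ (Prod.ext ?_ ?_)
    · simp
    · simp only [Prod.snd_add, Prod.fst_add, Prod.smul_snd, Prod.smul_fst, map_zero,
        zero_sub, smul_neg, smul_smul, inv_mul_cancel₀ hβ0, one_smul]
      rw [← hDsum]; abel
    · simp only [Prod.snd_add, Prod.smul_snd, smul_eq_mul, inner_zero_right, neg_zero,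
        zero_add]
      rw [← mul_assoc, inv_mul_cancel₀ hβ0, one_mul, hinner]
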